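/- Let F_q be a finite field and n a positive integer with q ≡ 3 (mod 4), 8 | n, and rad(n) dividing q − 1. Set r = min(ν_2(n/2), ν_2(q + 1)) and l_2 = (q² − 1)/gcd(q² − 1, n). Then gcd(n/2, q + 1) = 2^r and gcd(q + 1, l_2) = (q + 1)/2^r. -/

import Mathlib

open Polynomial

/-- If `q ≡ 3 (mod 4)`, `8 ∣ n` and `rad(n) ∣ q - 1`, then with
`r = min(ν₂(n/2), ν₂(q+1))` and `l₂ = (q² - 1)/gcd(q² - 1, n)` one has
`gcd(n/2, q+1) = 2^r` and `gcd(q+1, l₂) = (q+1)/2^r`. -/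
theorem gcd_two_power_identities {F : Type*} [Field F] [Fintype F]
    (q : ℕ) (hq : q = Fintype.card F) (n : ℕ) (hn : 0 < n)
    (h1 : q % 4 = 3) (h2 : 8 ∣ n)
    (h3 : (∏ p ∈ n.primeFactors, p) ∣ (q - 1))
    (r l2 : ℕ)
    (hr : r = min ((n / 2).factorization 2) ((q + 1).factorization 2))
    (hl2 : l2 = (q ^ 2 - 1) / Nat.gcd (q ^ 2 - 1) n) :
    Nat.gcd (n / 2) (q + 1) = 2 ^ r ∧ Nat.gcd (q + 1) l2 = (q + 1) / 2 ^ r := by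
  have hq3 : 3 ≤ q := by omega
  have hn8 : 8 ≤ n := Nat.le_of_dvd hn h2
  have h2n : 2 ∣ n := dvd_trans ⟨4, rfl⟩ h2
  have hn2 : n / 2 ≠ 0 := by omega
  have hq1 : q - 1 ≠ 0 := by omega
  have hq1' : q + 1 ≠ 0 := by omega
  have hsq : q ^ 2 - 1 = (q - 1) * (q + 1) := by
    obtain ⟨k, rfl⟩ : ∃ k, q = k + 3 := ⟨q - 3, by omega⟩
    have h : (k + 3) ^ 2 = (k + 2) * (k + 4) + 1 := by ring
    have h1 : k + 3 - 1 = k + 2 := by omega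
    have h2 : k + 3 + 1 = k + 4 := by omega
    rw [h, h1, h2, Nat.add_sub_cancel]
  have hsq0 : q ^ 2 - 1 ≠ 0 := by
    rw [hsq]; positivity
  -- odd primes dividing n do not divide q + 1
  have hodd : ∀ p : ℕ, p.Prime → p ≠ 2 → p ∣ n → ¬ p ∣ (q + 1) := by
    intro p hp hp2 hpn hpq
    have hpmem : p ∈ n.primeFactors := Nat.mem_primeFactors.2 ⟨hp, hpn, by omega⟩
    have hpq1 : p ∣ q - 1 := (Finset.dvd_prod_of_mem _ hpmem).trans h3
    have h2' : p ∣ q + 1 - (q - 1) := Nat.dvd_sub hpq hpq1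
    have h2'' : q + 1 - (q - 1) = 2 := by omega
    rw [h2''] at h2'
    exact hp2 ((Nat.prime_dvd_prime_iff_eq hp Nat.prime_two).1 h2')
  -- also odd primes dividing q+1 don't divide q-1
  have hodd' : ∀ p : ℕ, p.Prime → p ≠ 2 → p ∣ (q + 1) → ¬ p ∣ (q - 1) := by
    intro p hp hp2 hpq hpq1
    have h2' : p ∣ q + 1 - (q - 1) := Nat.dvd_sub hpq hpq1
    have h2'' : q + 1 - (q - 1) = 2 := by omega
    rw [h2''] at h2'
    exact hp2 ((Nat.prime_dvd_prime_iff_eq hp Nat.prime_two).1 h2')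
  have hA2 : 2 ≤ (q + 1).factorization 2 := by
    have h4 : (2 : ℕ) ^ 2 ∣ q + 1 := by
      have : (4 : ℕ) ∣ q + 1 := by omega
      simpa using this
    exact (Nat.Prime.pow_dvd_iff_le_factorization Nat.prime_two hq1').1 h4
  have hB3 : 3 ≤ n.factorization 2 := by
    have h8 : (2 : ℕ) ^ 3 ∣ n := by simpa using h2
    exact (Nat.Prime.pow_dvd_iff_le_factorization Nat.prime_two (by omega)).1 h8
  have hQ1 : (q - 1).factorization 2 = 1 := by
    obtain ⟨m, hm, hmo⟩ : ∃ m, q - 1 = 2 * m ∧ m % 2 = 1 := ⟨(q - 1) / 2, by omega, by omega⟩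
    have hm0 : m ≠ 0 := by omega
    rw [hm, Nat.factorization_mul (by norm_num) hm0]
    simp [Nat.Prime.factorization_self Nat.prime_two,
      Nat.factorization_eq_zero_of_not_dvd (by omega : ¬ (2 : ℕ) ∣ m)]
  -- factorization of n/2
  have hn2f : ∀ p : ℕ, (n / 2).factorization p = n.factorization p - (2 : ℕ).factorization p := by
    intro p; rw [Nat.factorization_div h2n]; simp
  have hn2f2 : (n / 2).factorization 2 = n.factorization 2 - 1 := by
    rw [hn2f 2, Nat.Prime.factorization_self Nat.prime_two]
  -- r ≤ ν₂(q+1), so 2^r ∣ q+1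
  have hrle : r ≤ (q + 1).factorization 2 := by rw [hr]; exact min_le_right _ _
  have hrdvd : (2 : ℕ) ^ r ∣ q + 1 :=
    (pow_dvd_pow 2 hrle).trans (Nat.ordProj_dvd (q + 1) 2)
  have hdivne : (q + 1) / 2 ^ r ≠ 0 :=
    Nat.ne_of_gt (Nat.div_pos (Nat.le_of_dvd (by omega) hrdvd) (Nat.pow_pos (n := r) (by norm_num)))
  have hg0 : Nat.gcd (q ^ 2 - 1) n ≠ 0 := Nat.ne_of_gt (Nat.gcd_pos_of_pos_left n (by omega))
  have hl2ne : l2 ≠ 0 := by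
    rw [hl2]
    exact Nat.ne_of_gt (Nat.div_pos (Nat.le_of_dvd (by omega) (Nat.gcd_dvd_left _ _)) (by omega))
  have hpowf : ∀ p : ℕ, ((2 : ℕ) ^ r).factorization p = if p = 2 then r else 0 := by
    intro p
    rw [Nat.Prime.factorization_pow Nat.prime_two, Finsupp.single_apply]
    simp [eq_comm]
  constructor
  · apply Nat.eq_of_factorization_eq (Nat.gcd_ne_zero_left hn2) (by positivity)
    intro p
    rw [Nat.factorization_gcd hn2 hq1', Finsupp.inf_apply, hpowf p]
    by_cases hp : p.Prime
    · by_cases hp2 : p = 2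
      · subst hp2
        simp only [hr]
        rw [if_true]
      · rw [if_neg hp2]
        by_cases hpn : p ∣ n
        · have : (q + 1).factorization p = 0 :=
            Nat.factorization_eq_zero_of_not_dvd (hodd p hp hp2 hpn)
          omega
        · have hpn2 : ¬ p ∣ n / 2 := fun hc => hpn (hc.trans (Nat.div_dvd_of_dvd h2n))
          have : (n / 2).factorization p = 0 := Nat.factorization_eq_zero_of_not_dvd hpn2
          omega
    · have hp2 : p ≠ 2 := fun h => hp (h ▸ Nat.prime_two)
      simp [Nat.factorization_eq_zero_of_not_prime _ hp, hp2]
  · apply Nat.eq_of_factorization_eq (Nat.gcd_ne_zero_left hq1') hdivne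
    intro p
    rw [Nat.factorization_gcd hq1' hl2ne, Finsupp.inf_apply,
      Nat.factorization_div hrdvd]
    have hl2f : l2.factorization p
        = (q - 1).factorization p + (q + 1).factorization p
          - min ((q - 1).factorization p + (q + 1).factorization p) (n.factorization p) := by
      rw [hl2, Nat.factorization_div (Nat.gcd_dvd_left _ _),
        Nat.factorization_gcd hsq0 (by omega)]
      simp only [Finsupp.tsub_apply, Finsupp.inf_apply]
      rw [hsq, Nat.factorization_mul hq1 hq1']
      simp
    by_cases hp : p.Prime
    · by_cases hp2 : p = 2
      · subst hp2
        rw [hl2f]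
        simp only [Finsupp.tsub_apply, hpowf 2, hQ1]
        rw [if_true]
        have hrr : r = min (n.factorization 2 - 1) ((q + 1).factorization 2) := by
          rw [hr, hn2f2]
        have e1 : ∀ a b : ℕ, a ⊓ b = min a b := fun _ _ => rfl
        simp only [e1] at *
        omega
      · rw [hl2f]
        simp only [Finsupp.tsub_apply, hpowf p, if_neg hp2]
        by_cases hpq : p ∣ q + 1
        · have h1' : (q - 1).factorization p = 0 :=
            Nat.factorization_eq_zero_of_not_dvd (hodd' p hp hp2 hpq)
          have h2' : n.factorization p = 0 := by
            refine Nat.factorization_eq_zero_of_not_dvd fun hc => ?_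
            exact hodd p hp hp2 hc hpq
          omega
        · have h1' : (q + 1).factorization p = 0 :=
            Nat.factorization_eq_zero_of_not_dvd hpq
          omega
    · have hp2 : p ≠ 2 := fun h => hp (h ▸ Nat.prime_two)
      simp [Nat.factorization_eq_zero_of_not_prime _ hp, hp2, hl2f]
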